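/- Let M > 0 satisfy 2(1 + 4·∑_{j=0}^∞ (j+1)^{-2})·M ≤ 1/2, and define Γ₁(k) = M·k!/k³ for k ≥ 1 with Γ₁(0) = M. Then for every multi-index α (in ℕ^d), ∑_{α'+α''=α} binom(α, α') · Γ₁(|α'|) · Γ₁(|α''|) ≤ Γ₁(|α|)/2. -/

import Mathlib

open Finset Polynomial

lemma expand_one_add_X_pow (m : ℕ) :
    ((1 + X : ℕ[X]) ^ m) = ∑ k ∈ Finset.range (m + 1), Polynomial.C (m.choose k) * X ^ k := by
  ext c
  rw [coeff_one_add_X_pow, finset_sum_coeff]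
  simp only [coeff_C_mul, coeff_X_pow, mul_ite, mul_one, mul_zero]
  simp only [Nat.cast_id]
  rw [Finset.sum_congr rfl (fun x _ => by rw [show (if c = x then m.choose x else 0) = (if c = x then m.choose c else 0) by split <;> simp_all]),
    Finset.sum_ite_eq]
  simp only [Finset.mem_range, Nat.lt_succ_iff]
  split
  · rfl
  · next h => rw [Nat.choose_eq_zero_of_lt (by omega)]

lemma my_vandermonde (d : ℕ) (α : Fin d → ℕ) (j : ℕ) :
    ∑ x ∈ (Finset.Iic α).filter (fun x => ∑ i, x i = j),
        ∏ i, (α i).choose (x i) = (∑ i, α i).choose j := by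
  have hIic : Finset.Iic α = Fintype.piFinset (fun i => Finset.range (α i + 1)) := by
    ext x
    simp [Fintype.mem_piFinset, Finset.mem_Iic, Pi.le_def, Nat.lt_succ_iff]
  have hpoly : ((1 + X : ℕ[X]) ^ (∑ i, α i)) =
      ∑ x ∈ Fintype.piFinset (fun i => Finset.range (α i + 1)),
        Polynomial.C (∏ i, (α i).choose (x i)) * X ^ (∑ i, x i) := by
    rw [← Finset.prod_pow_eq_pow_sum]
    calc ∏ i, (1 + X : ℕ[X]) ^ (α i)
        = ∏ i, ∑ k ∈ Finset.range (α i + 1), Polynomial.C ((α i).choose k) * X ^ k := by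
          simp_rw [expand_one_add_X_pow]
      _ = ∑ x ∈ Fintype.piFinset (fun i => Finset.range (α i + 1)),
            ∏ i, Polynomial.C ((α i).choose (x i)) * X ^ (x i) :=
          Finset.prod_univ_sum _ _
      _ = _ := by
          refine Finset.sum_congr rfl fun x _ => ?_
          rw [Finset.prod_mul_distrib, Finset.prod_pow_eq_pow_sum, ← map_prod]
  have := congrArg (fun p : ℕ[X] => p.coeff j) hpoly
  simp only [coeff_one_add_X_pow, finset_sum_coeff, coeff_C_mul, coeff_X_pow, mul_ite,
    mul_one, mul_zero] at this
  simp only [Nat.cast_id] at this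
  rw [hIic, Finset.sum_filter, this]
  refine Finset.sum_congr rfl fun x _ => ?_
  simp [eq_comm]

lemma core_ineq (M c jf njf nf a b : ℝ) (hM : 0 < M) (hnf : 0 ≤ nf)
    (ha : 1 ≤ a) (hb : 1 ≤ b) (h : c * jf * njf = nf) (_hjf : 0 ≤ jf) (_hc : 0 ≤ c) :
    c * (M * jf / a ^ 3 * (M * njf / b ^ 3)) ≤
      4 * M * (M * nf / (a + b) ^ 3) * (1 / a ^ 3 + 1 / b ^ 3) := by
  have ha0 : (0:ℝ) < a := by linarith
  have hb0 : (0:ℝ) < b := by linarith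
  have hab0 : (0:ℝ) < a + b := by linarith
  have h3 : (a + b) ^ 3 ≤ 4 * (a ^ 3 + b ^ 3) := by
    nlinarith [mul_nonneg hab0.le (sq_nonneg (a - b))]
  have E1 : c * (M * jf / a ^ 3 * (M * njf / b ^ 3)) = M ^ 2 * nf / (a ^ 3 * b ^ 3) := by
    field_simp
    linear_combination h
  have E2 : 4 * M * (M * nf / (a + b) ^ 3) * (1 / a ^ 3 + 1 / b ^ 3)
      = M ^ 2 * nf * (4 * (a ^ 3 + b ^ 3)) / (a ^ 3 * b ^ 3 * (a + b) ^ 3) := by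
    field_simp
    ring
  rw [E1, E2]
  rw [div_le_div_iff₀ (by positivity) (by positivity)]
  have h4 : (0:ℝ) ≤ M ^ 2 * nf * (a ^ 3 * b ^ 3) := by positivity
  nlinarith [mul_le_mul_of_nonneg_left h3 h4]

theorem stmt_0 (d : ℕ) (M : ℝ) (hM0 : 0 < M)
    (hM : 2 * (1 + 4 * (∑' j : ℕ, (1 : ℝ) / (j + 1) ^ 2)) * M ≤ 1 / 2)
    (Γ₁ : ℕ → ℝ) (hΓ0 : Γ₁ 0 = M)
    (hΓ : ∀ k : ℕ, 1 ≤ k → Γ₁ k = M * (Nat.factorial k) / (k : ℝ) ^ 3)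
    (α : Fin d → ℕ) :
    ∑ α' ∈ Finset.Iic α,
      (∏ i, ((α i).choose (α' i)) : ℝ) * Γ₁ (∑ i, α' i) * Γ₁ (∑ i, (α i - α' i))
      ≤ Γ₁ (∑ i, α i) / 2 := by
  classical
  set n := ∑ i, α i with hn
  set S := ∑' j : ℕ, (1 : ℝ) / (j + 1) ^ 2 with hSdef
  have hsum : Summable (fun j : ℕ => (1 : ℝ) / (j + 1) ^ 2) := by
    have h1 : Summable (fun j : ℕ => (1 : ℝ) / (j : ℝ) ^ 2) :=
      Real.summable_one_div_nat_pow.mpr (by norm_num)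
    have := (summable_nat_add_iff 1).mpr h1
    refine this.congr fun j => ?_
    push_cast
    ring_nf
  have hS1 : (1 : ℝ) ≤ S := by
    have := Summable.le_tsum hsum 0 (fun j _ => by positivity)
    rw [hSdef]
    simpa [one_div] using this
  have hΓpos : ∀ k, 0 < Γ₁ k := by
    intro k
    rcases Nat.eq_zero_or_pos k with h | h
    · simpa [h, hΓ0] using hM0
    · rw [hΓ k h]
      have hk : (0:ℝ) < k := by exact_mod_cast h
      positivity
  -- Step 1: single-index reduction
  have key : ∑ α' ∈ Finset.Iic α,
      (∏ i, ((α i).choose (α' i)) : ℝ) * Γ₁ (∑ i, α' i) * Γ₁ (∑ i, (α i - α' i))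
      = ∑ j ∈ Finset.range (n + 1), (n.choose j : ℝ) * (Γ₁ j * Γ₁ (n - j)) := by
    rw [← Finset.sum_fiberwise_of_maps_to (g := fun x => ∑ i, x i) (t := Finset.range (n + 1))
      (fun x hx => by
        rw [Finset.mem_range, Nat.lt_succ_iff]
        exact Finset.sum_le_sum fun i _ => (Finset.mem_Iic.mp hx) i)]
    refine Finset.sum_congr rfl fun j hj => ?_
    have step : ∀ x ∈ (Finset.Iic α).filter (fun x => ∑ i, x i = j),
        (∏ i, ((α i).choose (x i)) : ℝ) * Γ₁ (∑ i, x i) * Γ₁ (∑ i, (α i - x i))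
        = (Γ₁ j * Γ₁ (n - j)) * (∏ i, ((α i).choose (x i)) : ℝ) := by
      intro x hx
      obtain ⟨hx1, hx2⟩ := Finset.mem_filter.mp hx
      have hle : x ≤ α := Finset.mem_Iic.mp hx1
      have h2 : ∑ i, (α i - x i) = n - j := by
        have : ∑ i, (α i - x i) + ∑ i, x i = n := by
          rw [← Finset.sum_add_distrib]
          exact Finset.sum_congr rfl fun i _ => Nat.sub_add_cancel (hle i)
        omega
      rw [hx2, h2]; ring
    rw [Finset.sum_congr rfl step, ← Finset.mul_sum]
    have : ∑ x ∈ (Finset.Iic α).filter (fun x => ∑ i, x i = j),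
        (∏ i, ((α i).choose (x i)) : ℝ) = (n.choose j : ℝ) := by
      rw [← my_vandermonde d α j]
      push_cast
      rfl
    rw [this]; ring
  rw [key]
  -- Step 2: the scalar inequality
  rcases Nat.eq_zero_or_pos n with hn0 | hn1
  · rw [hn0]
    have hM12 : M ≤ 1 / 20 := by nlinarith
    simp [hΓ0]
    nlinarith
  · -- n ≥ 1
    have hΓn : Γ₁ n = M * n.factorial / (n : ℝ) ^ 3 := hΓ n hn1
    have hΓnpos := hΓpos n
    -- split the sum
    have hsplit : ∑ j ∈ Finset.range (n + 1), (n.choose j : ℝ) * (Γ₁ j * Γ₁ (n - j))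
        = M * Γ₁ n + (∑ j ∈ Finset.Ico 1 n, (n.choose j : ℝ) * (Γ₁ j * Γ₁ (n - j)))
          + Γ₁ n * M := by
      rw [Finset.sum_range_succ, Finset.range_eq_Ico,
        Finset.sum_eq_sum_Ico_succ_bot hn1]
      simp only [Nat.choose_zero_right, Nat.choose_self, Nat.cast_one, one_mul,
        Nat.sub_zero, Nat.sub_self, hΓ0, Nat.cast_ofNat, zero_add]
    rw [hsplit]
    have hmid : ∑ j ∈ Finset.Ico 1 n, (n.choose j : ℝ) * (Γ₁ j * Γ₁ (n - j))
        ≤ ∑ j ∈ Finset.Ico 1 n,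
            4 * M * Γ₁ n * (1 / (j : ℝ) ^ 3 + 1 / ((n - j : ℕ) : ℝ) ^ 3) := by
      refine Finset.sum_le_sum fun j hj => ?_
      obtain ⟨hj1, hjn⟩ := Finset.mem_Ico.mp hj
      have hnj1 : 1 ≤ n - j := by omega
      rw [hΓ j hj1, hΓ (n - j) hnj1, hΓn]
      have hfac : ((n.choose j : ℕ) : ℝ) * (j.factorial : ℝ) * ((n - j).factorial : ℝ)
          = (n.factorial : ℝ) := by
        exact_mod_cast congrArg (Nat.cast (R := ℝ))
          (Nat.choose_mul_factorial_mul_factorial (le_of_lt hjn))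
      have hab : (j : ℝ) + ((n - j : ℕ) : ℝ) = (n : ℝ) := by
        push_cast [Nat.cast_sub (le_of_lt hjn)]
        ring
      rw [← hab]
      exact core_ineq M (n.choose j) (j.factorial) ((n - j).factorial) (n.factorial)
        (j : ℝ) ((n - j : ℕ) : ℝ) hM0 (by positivity)
        (by exact_mod_cast hj1) (by exact_mod_cast hnj1) hfac (by positivity) (by positivity)
    have hrefl : ∑ j ∈ Finset.Ico 1 n, (1 : ℝ) / ((n - j : ℕ) : ℝ) ^ 3
        = ∑ j ∈ Finset.Ico 1 n, (1 : ℝ) / (j : ℝ) ^ 3 := by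
      refine Finset.sum_nbij' (fun j => n - j) (fun j => n - j) ?_ ?_ ?_ ?_ ?_
      · intro a ha; rw [Finset.mem_Ico] at ha; show n - a ∈ Finset.Ico 1 n
        rw [Finset.mem_Ico]; omega
      · intro a ha; rw [Finset.mem_Ico] at ha; show n - a ∈ Finset.Ico 1 n
        rw [Finset.mem_Ico]; omega
      · intro a ha; rw [Finset.mem_Ico] at ha; show n - (n - a) = a; omega
      · intro a ha; rw [Finset.mem_Ico] at ha; show n - (n - a) = a; omega
      · intro a ha; rfl
    have hcube : ∑ j ∈ Finset.Ico 1 n, (1 : ℝ) / (j : ℝ) ^ 3 ≤ S := by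
      have h1 : ∑ j ∈ Finset.Ico 1 n, (1 : ℝ) / (j : ℝ) ^ 3
          ≤ ∑ j ∈ Finset.Ico 1 n, (1 : ℝ) / (j : ℝ) ^ 2 := by
        refine Finset.sum_le_sum fun j hj => ?_
        obtain ⟨hj1, _⟩ := Finset.mem_Ico.mp hj
        have hj1' : (1:ℝ) ≤ (j:ℝ) := by exact_mod_cast hj1
        have h23 : (j:ℝ)^2 ≤ (j:ℝ)^3 := by nlinarith
        exact one_div_le_one_div_of_le (by positivity) h23
      have h2 : ∑ j ∈ Finset.Ico 1 n, (1 : ℝ) / (j : ℝ) ^ 2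
          = ∑ k ∈ Finset.range (n - 1), (1 : ℝ) / ((k : ℝ) + 1) ^ 2 := by
        rw [Finset.sum_Ico_eq_sum_range]
        refine Finset.sum_congr rfl fun k _ => ?_
        push_cast
        ring_nf
      have h3 : ∑ k ∈ Finset.range (n - 1), (1 : ℝ) / ((k : ℝ) + 1) ^ 2 ≤ S := by
        exact Summable.sum_le_tsum _ (fun j _ => by positivity) hsum
      linarith
    -- assemble
    have hC : ∑ j ∈ Finset.Ico 1 n,
        4 * M * Γ₁ n * (1 / (j : ℝ) ^ 3 + 1 / ((n - j : ℕ) : ℝ) ^ 3)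
        ≤ 4 * M * Γ₁ n * (2 * S) := by
      rw [← Finset.mul_sum, Finset.sum_add_distrib, hrefl]
      have h4 : 0 < 4 * M * Γ₁ n := by positivity
      have := hcube
      nlinarith
    have hMΓ : 2 * (1 + 4 * S) * M * Γ₁ n ≤ (1 / 2) * Γ₁ n := by
      have : 2 * (1 + 4 * S) * M ≤ 1 / 2 := hM
      nlinarith
    nlinarith [hΓpos n]
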